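/- Under the setup, suppose D₁ ≥ D₀ almost surely, for all d, z ∈ {0,1} the pair (Z, W) is conditionally independent of Y_{d,z} given (D₁, D₀), Z is conditionally independent of (D₁, D₀) given W, P(Z = z, W = 1) > 0 for z ∈ {0,1}, and P(CP | W = 1) > 0. Then E[D | Z = 1, W = 1] − E[D | Z = 0, W = 1] = P(CP | W = 1) and E[Y | Z = 1, W = 1] − E[Y | Z = 0, W = 1] = r₁(1) + r₀(1), so that the conditional Wald ratio satisfies IV₁ := (E[Y | Z = 1, W = 1] − E[Y | Z = 0, W = 1]) / (E[D | Z = 1, W = 1] − E[D | Z = 0, W = 1]) = (r₁(1) + r₀(1)) / P(CP | W = 1), where r₁(w) = E[Y·D | Z = 1, W = w] − E[Y·D | Z = 0, W = w] and r₀(w) = E[Y·(1−D) | Z = 1, W = w] − E[Y·(1−D) | Z = 0, W = w]. -/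

import Mathlib

open MeasureTheory ProbabilityTheory

/-- `pr μ A` is the probability of the event `A`, as a real number. -/
noncomputable def pr {Ω : Type*} [MeasurableSpace Ω] (μ : Measure Ω) (A : Set Ω) : ℝ :=
  (μ A).toReal

/-- `prCond μ A B` is the conditional probability `P(A | B) = P(A ∩ B) / P(B)`. -/
noncomputable def prCond {Ω : Type*} [MeasurableSpace Ω] (μ : Measure Ω) (A B : Set Ω) : ℝ :=
  pr μ (A ∩ B) / pr μ B

/-- `cexp μ A f` is the conditional expectation `E[f | A]` of `f` given the event `A`. -/
noncomputable def cexp {Ω : Type*} [MeasurableSpace Ω] (μ : Measure Ω) (A : Set Ω)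
    (f : Ω → ℝ) : ℝ :=
  ∫ ω, f ω ∂(μ[|A])

/-- The event `{ω | f ω = c}`. -/
def evEq {Ω : Type*} (f : Ω → ℝ) (c : ℝ) : Set Ω := {ω | f ω = c}

/-- Always takers: `D₁ = D₀ = 1`. -/
def ATset {Ω : Type*} (D1 D0 : Ω → ℝ) : Set Ω := {ω | D1 ω = 1 ∧ D0 ω = 1}

/-- Never takers: `D₁ = D₀ = 0`. -/
def NTset {Ω : Type*} (D1 D0 : Ω → ℝ) : Set Ω := {ω | D1 ω = 0 ∧ D0 ω = 0}

/-- Compliers: `D₁ = 1`, `D₀ = 0`. -/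
def CPset {Ω : Type*} (D1 D0 : Ω → ℝ) : Set Ω := {ω | D1 ω = 1 ∧ D0 ω = 0}

section Aux
variable {Ω : Type*} [MeasurableSpace Ω] {μ : Measure Ω}

lemma measurableSet_evEq {f : Ω → ℝ} (hf : Measurable f) (c : ℝ) :
    MeasurableSet (evEq f c) := hf (measurableSet_singleton c)

lemma cexp_of_indicator [IsFiniteMeasure μ] {A : Set Ω} (hA : MeasurableSet A)
    {f : Ω → ℝ} (hf : Measurable f) (hfv : ∀ ω, f ω = 0 ∨ f ω = 1) :
    cexp μ A f = (μ (A ∩ {ω | f ω = 1})).toReal / (μ A).toReal := by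
  have hs : MeasurableSet {ω | f ω = 1} := hf (measurableSet_singleton 1)
  have hfind : f = Set.indicator {ω | f ω = 1} (fun _ => (1:ℝ)) := by
    funext ω
    rcases hfv ω with h | h <;> simp [Set.indicator, h]
  have hint : ∫ ω, f ω ∂(μ[|A]) = ((μ[|A]) {ω | f ω = 1}).toReal := by
    conv_lhs => rw [show (fun ω => f ω) = f from rfl, hfind]
    rw [integral_indicator_const _ hs, smul_eq_mul, mul_one]
    rfl
  rw [cexp, hint, cond_apply hA μ, ENNReal.toReal_mul, ENNReal.toReal_inv,
    div_eq_mul_inv, mul_comm]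

lemma integrable_cond [IsFiniteMeasure μ] {A : Set Ω} {f : Ω → ℝ} (hf : Integrable f μ)
    (hA : μ A ≠ 0) : Integrable f (μ[|A]) := by
  rw [ProbabilityTheory.cond]
  exact (hf.restrict).smul_measure (ENNReal.inv_ne_top.mpr hA)

end Aux

/-- the conditional Wald ratio `IV₁` equals `(r₁(1) + r₀(1)) / P(CP | W = 1)`. -/
theorem IV1_decomposition
    {Ω : Type*} [MeasurableSpace Ω] (μ : Measure Ω) [IsProbabilityMeasure μ]
    (Y : Fin 2 → Fin 2 → Ω → ℝ) (D1 D0 Z W : Ω → ℝ)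
    (hYint : ∀ d z, Integrable (Y d z) μ) (hYmeas : ∀ d z, Measurable (Y d z))
    (hD1v : ∀ ω, D1 ω = 0 ∨ D1 ω = 1) (hD0v : ∀ ω, D0 ω = 0 ∨ D0 ω = 1)
    (hZv : ∀ ω, Z ω = 0 ∨ Z ω = 1) (hWv : ∀ ω, W ω = 0 ∨ W ω = 1)
    (hD1m : Measurable D1) (hD0m : Measurable D0) (hZm : Measurable Z) (hWm : Measurable W)
    (D : Ω → ℝ) (hD : ∀ ω, D ω = D1 ω * Z ω + D0 ω * (1 - Z ω))
    (Yo : Ω → ℝ)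
    (hYo : ∀ ω, Yo ω = (Y 1 1 ω * Z ω + Y 1 0 ω * (1 - Z ω)) * D ω
      + (Y 0 1 ω * Z ω + Y 0 0 ω * (1 - Z ω)) * (1 - D ω))
    (hmono : ∀ᵐ ω ∂μ, D0 ω ≤ D1 ω)
    (hCI1 : ∀ (d z : Fin 2) (i j : ℝ),
      IndepFun (fun ω => (Z ω, W ω)) (Y d z) (μ[|{ω | D1 ω = i ∧ D0 ω = j}]))
    (hCI2 : ∀ w' : ℝ, IndepFun Z (fun ω => (D1 ω, D0 ω)) (μ[|evEq W w']))
    (hpos : ∀ z : ℝ, z = 0 ∨ z = 1 → 0 < pr μ (evEq Z z ∩ evEq W 1))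
    (hCPW : 0 < prCond μ (CPset D1 D0) (evEq W 1))
    (r11 r01 : ℝ)
    (hr11 : r11 = cexp μ (evEq Z 1 ∩ evEq W 1) (fun ω => Yo ω * D ω)
      - cexp μ (evEq Z 0 ∩ evEq W 1) (fun ω => Yo ω * D ω))
    (hr01 : r01 = cexp μ (evEq Z 1 ∩ evEq W 1) (fun ω => Yo ω * (1 - D ω))
      - cexp μ (evEq Z 0 ∩ evEq W 1) (fun ω => Yo ω * (1 - D ω))) :
    cexp μ (evEq Z 1 ∩ evEq W 1) D - cexp μ (evEq Z 0 ∩ evEq W 1) D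
        = prCond μ (CPset D1 D0) (evEq W 1)
      ∧ cexp μ (evEq Z 1 ∩ evEq W 1) Yo - cexp μ (evEq Z 0 ∩ evEq W 1) Yo = r11 + r01
      ∧ (cexp μ (evEq Z 1 ∩ evEq W 1) Yo - cexp μ (evEq Z 0 ∩ evEq W 1) Yo)
          / (cexp μ (evEq Z 1 ∩ evEq W 1) D - cexp μ (evEq Z 0 ∩ evEq W 1) D)
        = (r11 + r01) / prCond μ (CPset D1 D0) (evEq W 1) := by
  classical
  have hW1m : MeasurableSet (evEq W 1) := measurableSet_evEq hWm 1
  have hAm : ∀ z : ℝ, MeasurableSet (evEq Z z ∩ evEq W 1) :=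
    fun z => (measurableSet_evEq hZm z).inter hW1m
  have hμA : ∀ z : ℝ, z = 0 ∨ z = 1 → μ (evEq Z z ∩ evEq W 1) ≠ 0 := by
    intro z hz h0
    have := hpos z hz
    rw [pr, h0] at this; simp at this
  have hμW1 : μ (evEq W 1) ≠ 0 := by
    intro h0
    exact hμA 1 (Or.inr rfl) (measure_mono_null Set.inter_subset_right h0)
  have hMpos : 0 < (μ (evEq W 1)).toReal :=
    ENNReal.toReal_pos hμW1 (measure_ne_top μ _)
  have hMne : (μ (evEq W 1)).toReal ≠ 0 := hMpos.ne'
  have hDv : ∀ ω, D ω = 0 ∨ D ω = 1 := by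
    intro ω
    rcases hZv ω with h | h <;> rw [hD ω, h]
    · simpa using hD0v ω
    · simpa using hD1v ω
  have hDm : Measurable D := by
    have : D = fun ω => D1 ω * Z ω + D0 ω * (1 - Z ω) := funext hD
    rw [this]
    exact (hD1m.mul hZm).add (hD0m.mul (measurable_const.sub hZm))
  -- KEY: conditional expectation of D given Z = z, W = 1
  have key : ∀ (z : ℝ) (Dz : Ω → ℝ) (t : Set (ℝ × ℝ)),
      (z = 0 ∨ z = 1) → MeasurableSet t →
      ((fun ω => (D1 ω, D0 ω)) ⁻¹' t = {ω | Dz ω = 1}) →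
      (∀ ω, Z ω = z → D ω = Dz ω) →
      cexp μ (evEq Z z ∩ evEq W 1) D
        = (μ ({ω | Dz ω = 1} ∩ evEq W 1)).toReal / (μ (evEq W 1)).toReal := by
    intro z Dz t hz ht hts hDz
    have h1 : cexp μ (evEq Z z ∩ evEq W 1) D
        = (μ ((evEq Z z ∩ evEq W 1) ∩ {ω | Dz ω = 1})).toReal
          / (μ (evEq Z z ∩ evEq W 1)).toReal := by
      rw [cexp_of_indicator (hAm z) hDm hDv]
      have hseteq : (evEq Z z ∩ evEq W 1) ∩ {ω | D ω = 1}
          = (evEq Z z ∩ evEq W 1) ∩ {ω | Dz ω = 1} := by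
        ext ω
        simp only [Set.mem_inter_iff, Set.mem_setOf_eq, evEq]
        constructor
        · rintro ⟨⟨hzω, hw⟩, hd⟩; exact ⟨⟨hzω, hw⟩, by rw [← hDz ω hzω]; exact hd⟩
        · rintro ⟨⟨hzω, hw⟩, hd⟩; exact ⟨⟨hzω, hw⟩, by rw [hDz ω hzω]; exact hd⟩
      rw [hseteq]
    have hind := (hCI2 1).measure_inter_preimage_eq_mul {z} t
      (measurableSet_singleton z) ht
    rw [hts, show Z ⁻¹' {z} = evEq Z z from rfl] at hind
    rw [cond_apply hW1m, cond_apply hW1m, cond_apply hW1m] at hind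
    set m := μ (evEq W 1) with hm
    set a := μ (evEq W 1 ∩ (evEq Z z ∩ {ω | Dz ω = 1})) with ha
    set b := μ (evEq W 1 ∩ evEq Z z) with hb
    set c := μ (evEq W 1 ∩ {ω | Dz ω = 1}) with hc
    have hreal : (m.toReal)⁻¹ * a.toReal
        = ((m.toReal)⁻¹ * b.toReal) * ((m.toReal)⁻¹ * c.toReal) := by
      have := congrArg ENNReal.toReal hind
      simpa [ENNReal.toReal_mul, ENNReal.toReal_inv] using this
    have hbpos : 0 < b.toReal := by
      have hbeq : b = μ (evEq Z z ∩ evEq W 1) := by rw [hb, Set.inter_comm]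
      rw [hbeq]; exact ENNReal.toReal_pos (hμA z hz) (measure_ne_top μ _)
    have haset : (evEq Z z ∩ evEq W 1) ∩ {ω | Dz ω = 1}
        = evEq W 1 ∩ (evEq Z z ∩ {ω | Dz ω = 1}) := by
      ext ω; simp only [Set.mem_inter_iff]; tauto
    have hcset : {ω | Dz ω = 1} ∩ evEq W 1 = evEq W 1 ∩ {ω | Dz ω = 1} :=
      Set.inter_comm _ _
    have hbset : evEq Z z ∩ evEq W 1 = evEq W 1 ∩ evEq Z z := Set.inter_comm _ _
    rw [h1, haset, hcset, hbset]
    have h2 : a.toReal * m.toReal = b.toReal * c.toReal := by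
      field_simp at hreal
      nlinarith [hreal, hMpos]
    rw [div_eq_div_iff hbpos.ne' hMne]
    nlinarith [h2]
  have h1a := key 1 D1 ({1} ×ˢ (Set.univ : Set ℝ)) (Or.inr rfl)
    ((measurableSet_singleton 1).prod MeasurableSet.univ)
    (by ext ω; simp [eq_comm]) (fun ω hω => by rw [hD ω, hω]; ring)
  have h0a := key 0 D0 ((Set.univ : Set ℝ) ×ˢ {1}) (Or.inl rfl)
    (MeasurableSet.univ.prod (measurableSet_singleton 1))
    (by ext ω; simp [eq_comm]) (fun ω hω => by rw [hD ω, hω]; ring)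
  -- monotonicity split
  have hCPm : MeasurableSet (CPset D1 D0) := by
    have : CPset D1 D0 = {ω | D1 ω = 1} ∩ {ω | D0 ω = 0} := rfl
    rw [this]
    exact (hD1m (measurableSet_singleton 1)).inter (hD0m (measurableSet_singleton 0))
  have hsplit : μ ({ω | D1 ω = 1} ∩ evEq W 1)
      = μ ({ω | D0 ω = 1} ∩ evEq W 1) + μ (CPset D1 D0 ∩ evEq W 1) := by
    have hpart : {ω | D1 ω = 1} ∩ evEq W 1
        = (({ω | D1 ω = 1} ∩ {ω | D0 ω = 1}) ∩ evEq W 1) ∪ ((CPset D1 D0) ∩ evEq W 1) := by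
      ext ω
      have := hD0v ω
      simp only [Set.mem_inter_iff, Set.mem_union, Set.mem_setOf_eq, CPset]
      tauto
    have hdisj : Disjoint (({ω | D1 ω = 1} ∩ {ω | D0 ω = 1}) ∩ evEq W 1)
        ((CPset D1 D0) ∩ evEq W 1) := by
      rw [Set.disjoint_left]
      rintro ω ⟨⟨_, h1⟩, _⟩ ⟨⟨_, h0⟩, _⟩
      rw [h1] at h0; norm_num at h0
    rw [hpart, measure_union hdisj (hCPm.inter hW1m)]
    congr 1
    apply measure_congr
    rw [Filter.eventuallyEq_set]
    filter_upwards [hmono] with ω hω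
    simp only [Set.mem_inter_iff, Set.mem_setOf_eq]
    constructor
    · rintro ⟨⟨_, h0⟩, hw⟩; exact ⟨h0, hw⟩
    · rintro ⟨h0, hw⟩
      rcases hD1v ω with h | h
      · rw [h0, h] at hω; norm_num at hω
      · exact ⟨⟨h, h0⟩, hw⟩
  have part1 : cexp μ (evEq Z 1 ∩ evEq W 1) D - cexp μ (evEq Z 0 ∩ evEq W 1) D
      = prCond μ (CPset D1 D0) (evEq W 1) := by
    rw [h1a, h0a, prCond, pr, pr, hsplit,
      ENNReal.toReal_add (measure_ne_top μ _) (measure_ne_top μ _)]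
    field_simp
    ring
  -- Part 2
  have hYom : Measurable Yo := by
    have : Yo = fun ω => (Y 1 1 ω * Z ω + Y 1 0 ω * (1 - Z ω)) * D ω
        + (Y 0 1 ω * Z ω + Y 0 0 ω * (1 - Z ω)) * (1 - D ω) := funext hYo
    rw [this]
    exact (((((hYmeas 1 1).mul hZm).add ((hYmeas 1 0).mul (measurable_const.sub hZm))).mul hDm)).add
      ((((hYmeas 0 1).mul hZm).add ((hYmeas 0 0).mul (measurable_const.sub hZm))).mul
        (measurable_const.sub hDm))
  set g : Ω → ℝ := fun ω => |Y 1 1 ω| + |Y 1 0 ω| + |Y 0 1 ω| + |Y 0 0 ω| with hg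
  have hgint : Integrable g μ :=
    (((hYint 1 1).abs.add (hYint 1 0).abs).add (hYint 0 1).abs).add (hYint 0 0).abs
  have hYocase : ∀ ω, Yo ω = Y 1 1 ω ∨ Yo ω = Y 1 0 ω ∨ Yo ω = Y 0 1 ω ∨ Yo ω = Y 0 0 ω := by
    intro ω
    rcases hZv ω with hz | hz <;> rcases hDv ω with hd | hd
    · exact Or.inr (Or.inr (Or.inr (by rw [hYo ω, hz, hd]; ring)))
    · exact Or.inr (Or.inl (by rw [hYo ω, hz, hd]; ring))
    · exact Or.inr (Or.inr (Or.inl (by rw [hYo ω, hz, hd]; ring)))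
    · exact Or.inl (by rw [hYo ω, hz, hd]; ring)
  have hgnn : ∀ ω, 0 ≤ g ω := by
    intro ω
    simp only [hg]
    positivity
  have habs : ∀ ω, |Yo ω| ≤ g ω := by
    intro ω
    have n1 := abs_nonneg (Y 1 1 ω); have n2 := abs_nonneg (Y 1 0 ω)
    have n3 := abs_nonneg (Y 0 1 ω); have n4 := abs_nonneg (Y 0 0 ω)
    rcases hYocase ω with h | h | h | h <;> rw [h] <;> simp only [hg] <;> linarith
  have habsD : ∀ ω, |Yo ω * D ω| ≤ g ω := by
    intro ω
    rcases hDv ω with h | h <;> rw [h]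
    · simpa using hgnn ω
    · simpa using habs ω
  have habsD' : ∀ ω, |Yo ω * (1 - D ω)| ≤ g ω := by
    intro ω
    rcases hDv ω with h | h <;> rw [h] <;> norm_num
    · exact habs ω
    · exact hgnn ω
  have hint : ∀ (z : ℝ), z = 0 ∨ z = 1 → ∀ f : Ω → ℝ, Measurable f → (∀ ω, |f ω| ≤ g ω) →
      Integrable f (μ[|evEq Z z ∩ evEq W 1]) := by
    intro z hz f hfm hfb
    apply integrable_cond _ (hμA z hz)
    exact hgint.mono hfm.aestronglyMeasurable (Filter.Eventually.of_forall (fun ω => by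
      simp only [Real.norm_eq_abs]
      exact (hfb ω).trans (le_abs_self _)))
  have part2aux : ∀ z : ℝ, z = 0 ∨ z = 1 →
      cexp μ (evEq Z z ∩ evEq W 1) Yo
        = cexp μ (evEq Z z ∩ evEq W 1) (fun ω => Yo ω * D ω)
          + cexp μ (evEq Z z ∩ evEq W 1) (fun ω => Yo ω * (1 - D ω)) := by
    intro z hz
    have hi1 := hint z hz (fun ω => Yo ω * D ω) (hYom.mul hDm) habsD
    have hi2 := hint z hz (fun ω => Yo ω * (1 - D ω))
      (hYom.mul (measurable_const.sub hDm)) habsD'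
    rw [cexp, cexp, cexp, ← integral_add hi1 hi2]
    congr 1
    funext ω
    ring
  have part2 : cexp μ (evEq Z 1 ∩ evEq W 1) Yo - cexp μ (evEq Z 0 ∩ evEq W 1) Yo
      = r11 + r01 := by
    rw [hr11, hr01, part2aux 1 (Or.inr rfl), part2aux 0 (Or.inl rfl)]
    ring
  exact ⟨part1, part2, by rw [part1, part2]⟩
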